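/- (Deletion–contraction) For any edge e of a finite graph G, χ(G, t) = χ(G − e, t) − χ(G/e, t), where G − e is G with e deleted and G/e is G with the endpoints of e identified (keeping the graph simple). -/

import Mathlib

/-- The number of proper colorings of `G` with `t` colors. -/
noncomputable def chi {V : Type*} (G : SimpleGraph V) (t : ℕ) : ℕ :=
  Nat.card (G.Coloring (Fin t))

/-- The contraction `G/e` of the edge `e = {u, v}`: the vertex `v` is removed and identified
with `u`; parallel edges are merged (the graph stays simple). -/
def contractEdge {V : Type*} (G : SimpleGraph V) (u v : V) :
    SimpleGraph {x : V // x ≠ v} :=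
  SimpleGraph.fromRel (fun a b =>
    G.Adj a.1 b.1 ∨ (a.1 = u ∧ G.Adj v b.1) ∨ (b.1 = u ∧ G.Adj a.1 v))

@[simp] lemma coloring_mk_apply {V : Type*} {α : Type*} {G : SimpleGraph V}
    (f : V → α) (hf : ∀ {a b : V}, G.Adj a b → f a ≠ f b) (x : V) :
    (SimpleGraph.Coloring.mk f hf : G.Coloring α) x = f x := rfl

/-- Extend a coloring of the contracted graph's vertex set to all of `V`. -/
def pushColFun {V : Type*} {α : Type*} [DecidableEq V] (u v : V) (hne : u ≠ v)
    (g : {x : V // x ≠ v} → α) : V → α :=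
  fun x => if hx : x = v then g ⟨u, hne⟩ else g ⟨x, hx⟩

@[simp] lemma pushFun_apply_ne {V : Type*} {α : Type*} [DecidableEq V] (u v : V)
    (hne : u ≠ v) (g : {x : V // x ≠ v} → α) (x : V) (hx : x ≠ v) :
    pushColFun u v hne g x = g ⟨x, hx⟩ := by simp [pushColFun, hx]

@[simp] lemma pushFun_apply_v {V : Type*} {α : Type*} [DecidableEq V] (u v : V)
    (hne : u ≠ v) (g : {x : V // x ≠ v} → α) :
    pushColFun u v hne g v = g ⟨u, hne⟩ := by simp [pushColFun]

/-- Deletion–contraction: for any edge `e = {u, v}` of a finite simple graph `G`,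
`χ(G, t) = χ(G − e, t) − χ(G/e, t)`. -/
theorem chi_deletion_contraction {V : Type*} [Fintype V] [DecidableEq V]
    (G : SimpleGraph V) (u v : V) (h : G.Adj u v) (t : ℕ) :
    (chi G t : ℤ) =
      chi (G.deleteEdges {s(u, v)}) t - chi (contractEdge G u v) t := by
  classical
  have hne : u ≠ v := h.ne
  set Gd := G.deleteEdges {s(u, v)} with hGd
  have hGdAdj : ∀ a b, Gd.Adj a b ↔ G.Adj a b ∧ s(a, b) ≠ s(u, v) := by
    intro a b
    simp [hGd, SimpleGraph.deleteEdges_adj]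
  -- Equiv 1 : colorings of G ≃ colorings of Gd with c u ≠ c v
  have e1 : G.Coloring (Fin t) ≃ {c : Gd.Coloring (Fin t) // c u ≠ c v} :=
    { toFun := fun c => ⟨SimpleGraph.Coloring.mk c
        (fun {a b} hab => c.valid ((hGdAdj a b).mp hab).1), c.valid h⟩
      invFun := fun c => SimpleGraph.Coloring.mk c.1
        (by
          intro a b hab
          by_cases hs : s(a, b) = s(u, v)
          · rcases Sym2.eq_iff.mp hs with ⟨h1, h2⟩ | ⟨h1, h2⟩
            · rw [h1, h2]; exact c.2
            · rw [h1, h2]; exact fun hc => c.2 hc.symm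
          · exact c.1.valid ((hGdAdj a b).mpr ⟨hab, hs⟩))
      left_inv := fun c => rfl
      right_inv := fun c => rfl }
  -- in Gd (with c u = c v), adjacency to either endpoint doesn't matter, so we can
  -- transfer validity across the contraction.
  have key : ∀ (c : Gd.Coloring (Fin t)), c u = c v → ∀ p q : V, p ≠ v → q ≠ v → p ≠ q →
      (G.Adj p q ∨ (p = u ∧ G.Adj v q) ∨ (q = u ∧ G.Adj p v)) →
      c p ≠ c q := by
    intro c hc p q hp hq hpq hrel
    rcases hrel with hG | ⟨hpu, hG⟩ | ⟨hqu, hG⟩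
    · apply c.valid
      rw [hGdAdj]
      refine ⟨hG, fun hs => ?_⟩
      rcases Sym2.eq_iff.mp hs with ⟨h1, h2⟩ | ⟨h1, h2⟩
      · exact hq h2
      · exact hp h1
    · -- p = u, G.Adj v q
      have hvq : Gd.Adj v q := by
        rw [hGdAdj]
        refine ⟨hG, fun hs => ?_⟩
        rcases Sym2.eq_iff.mp hs with ⟨h1, h2⟩ | ⟨h1, h2⟩
        · exact hne h1.symm
        · exact hpq (hpu.trans h2.symm)
      have := c.valid hvq
      rw [← hc] at this
      rw [hpu]
      exact this
    · -- q = u, G.Adj p v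
      have hpv : Gd.Adj p v := by
        rw [hGdAdj]
        refine ⟨hG, fun hs => ?_⟩
        rcases Sym2.eq_iff.mp hs with ⟨h1, h2⟩ | ⟨h1, h2⟩
        · exact hpq (h1.trans hqu.symm)
        · exact hp h1
      have := c.valid hpv
      intro hh
      exact this (hh.trans (by rw [hqu]; exact hc))
  -- Equiv 2 : colorings of G/e ≃ colorings of Gd with c u = c v
  have e2 : (contractEdge G u v).Coloring (Fin t) ≃
      {c : Gd.Coloring (Fin t) // c u = c v} :=
    { toFun := fun d => ⟨SimpleGraph.Coloring.mk (pushColFun u v hne d)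
        (by
          intro a b hab
          obtain ⟨hGab, hs⟩ := (hGdAdj a b).mp hab
          have hab' : a ≠ b := hGab.ne
          by_cases ha : a = v
          · have hb : b ≠ v := fun hb => hab' (ha.trans hb.symm)
            have hbu : b ≠ u := by
              intro hbu
              apply hs
              rw [ha, hbu]
              exact Sym2.eq_swap
            rw [ha, pushFun_apply_v, pushFun_apply_ne u v hne d b hb]
            apply d.valid
            refine ⟨fun hh => hbu (congrArg Subtype.val hh).symm,
              Or.inl (Or.inr (Or.inl ⟨rfl, ha ▸ hGab⟩))⟩
          · by_cases hb : b = v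
            · have hau : a ≠ u := by
                intro hau
                apply hs
                rw [hau, hb]
              rw [hb, pushFun_apply_v, pushFun_apply_ne u v hne d a ha]
              intro hh
              apply d.valid (by
                refine ⟨fun hh2 => hau (congrArg Subtype.val hh2),
                  Or.inl (Or.inr (Or.inr ⟨rfl, hb ▸ hGab⟩))⟩ :
                (contractEdge G u v).Adj ⟨a, ha⟩ ⟨u, hne⟩)
              exact hh
            · rw [pushFun_apply_ne u v hne d a ha, pushFun_apply_ne u v hne d b hb]
              apply d.valid
              refine ⟨fun hh => hab' (congrArg Subtype.val hh),
                Or.inl (Or.inl hGab)⟩),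
        by
          show pushColFun u v hne (⇑d) u = pushColFun u v hne (⇑d) v
          rw [pushFun_apply_v, pushFun_apply_ne u v hne (⇑d) u hne]⟩
      invFun := fun c => SimpleGraph.Coloring.mk (fun x => c.1 x.1)
        (by
          rintro ⟨a, ha⟩ ⟨b, hb⟩ ⟨hab, hrel⟩
          have hab' : a ≠ b := fun hh => hab (Subtype.ext hh)
          rcases hrel with hrel | hrel
          · exact key c.1 c.2 a b ha hb hab' hrel
          · exact fun hh => key c.1 c.2 b a hb ha (Ne.symm hab') hrel hh.symm)
      left_inv := by
        intro d
        apply DFunLike.ext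
        rintro ⟨x, hx⟩
        show pushColFun u v hne (⇑d) x = d ⟨x, hx⟩
        exact pushFun_apply_ne u v hne (⇑d) x hx
      right_inv := by
        rintro ⟨c, hc⟩
        apply Subtype.ext
        apply DFunLike.ext
        intro x
        by_cases hx : x = v
        · show pushColFun u v hne _ x = c x
          rw [hx, pushFun_apply_v]
          exact hc
        · show pushColFun u v hne _ x = c x
          rw [pushFun_apply_ne u v hne _ x hx]
          rfl }
  haveI : Finite (Gd.Coloring (Fin t)) :=
    Finite.of_injective (fun c => (c : V → Fin t)) DFunLike.coe_injective
  haveI : Finite (G.Coloring (Fin t)) := Finite.of_equiv _ e1.symm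
  haveI : Finite ((contractEdge G u v).Coloring (Fin t)) := Finite.of_equiv _ e2.symm
  have hsum : Nat.card (Gd.Coloring (Fin t)) =
      Nat.card (G.Coloring (Fin t)) +
        Nat.card ((contractEdge G u v).Coloring (Fin t)) := by
    have := Nat.card_congr
      ((Equiv.sumCompl (fun c : Gd.Coloring (Fin t) => c u = c v)))
    rw [Nat.card_sum] at this
    rw [← this, Nat.card_congr e1, Nat.card_congr e2, Nat.add_comm]
  simp only [chi, hGd] at *
  omega
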